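/- For R ∈ (0, ∞) and ε > 0, let ξ_{ε,R} : ℝ → [−1,1] be the unique solution of ξ_{ε,R}(0) = 0, ξ_{ε,R}' = (1/ε)(1 − ξ_{ε,R}²)^{1/2}(1 − ξ_{ε,R}² + (πε/(2R))²)^{1/2}, and let η_{ε,R} ∈ (0, R] be the first point where ξ_{ε,R} reaches 1. Then the local transition energy satisfies (1/2) ∫_{−η_{ε,R}}^{η_{ε,R}} ( ε |ξ_{ε,R}'|²/(1 − ξ_{ε,R}²) + (1 − ξ_{ε,R}²)/ε ) dx ≤ 2 + π²ε/(4R). -/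

import Mathlib

open Real MeasureTheory

noncomputable section

/-- Lemma `le:opt`, local energy estimate: the transition energy of the
optimal profile `ξ_{ε,R}` on `(-η,η)` is at most `2 + π²ε/(4R)`. -/
theorem stmt_7 (R : ℝ) (hR : 0 < R) (ε : ℝ) (hε : 0 < ε)
    (ξ : ℝ → ℝ) (hrange : ∀ x, ξ x ∈ Set.Icc (-1 : ℝ) 1) (hzero : ξ 0 = 0)
    (hode : ∀ x, HasDerivAt ξ
      (ε⁻¹ * Real.sqrt (1 - ξ x ^ 2) *
        Real.sqrt (1 - ξ x ^ 2 + (π * ε / (2 * R)) ^ 2)) x)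
    (η : ℝ) (hη0 : 0 < η) (hηR : η ≤ R) (hη1 : ξ η = 1)
    (hηfirst : ∀ x, 0 ≤ x → x < η → ξ x < 1) :
    (1 / 2) * ∫ x in Set.Ioo (-η) η,
        (ε * (deriv ξ x) ^ 2 / (1 - ξ x ^ 2) + (1 - ξ x ^ 2) / ε)
      ≤ 2 + π ^ 2 * ε / (4 * R) := by
  set c : ℝ := π * ε / (2 * R) with hc
  have hcont : Continuous ξ := by
    rw [continuous_iff_continuousAt]
    exact fun x => (hode x).differentiableAt.continuousAt
  have hderiv : deriv ξ = fun x =>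
      ε⁻¹ * Real.sqrt (1 - ξ x ^ 2) * Real.sqrt (1 - ξ x ^ 2 + c ^ 2) := by
    funext x; exact (hode x).deriv
  have hdcont : Continuous (deriv ξ) := by
    rw [hderiv]; fun_prop
  have ha : ∀ x, 0 ≤ 1 - ξ x ^ 2 := fun x => by
    have h := hrange x; nlinarith [h.1, h.2]
  have hc2 : 0 ≤ c ^ 2 := sq_nonneg c
  have hpt : ∀ x, ε * (deriv ξ x) ^ 2 / (1 - ξ x ^ 2) + (1 - ξ x ^ 2) / ε
      ≤ 2 * deriv ξ x + c ^ 2 / ε := by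
    intro x
    rcases eq_or_lt_of_le (ha x) with h0 | h0
    · have hd0 : deriv ξ x = 0 := by
        rw [hderiv]; simp only [← h0]; simp
      rw [hd0, ← h0]
      have : c ^ 2 / ε ≥ 0 := by positivity
      simp; linarith
    · have hb : (0:ℝ) ≤ 1 - ξ x ^ 2 + c ^ 2 := by linarith
      have hdsq : (deriv ξ x) ^ 2
          = ε⁻¹ ^ 2 * ((1 - ξ x ^ 2) * (1 - ξ x ^ 2 + c ^ 2)) := by
        rw [hderiv]
        simp only [mul_pow]
        rw [sq_sqrt (le_of_lt h0), sq_sqrt hb]; ring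
      have heq : ε * (deriv ξ x) ^ 2 / (1 - ξ x ^ 2) = (1 - ξ x ^ 2 + c ^ 2) / ε := by
        rw [hdsq]; field_simp
      have hge : (1 - ξ x ^ 2) / ε ≤ deriv ξ x := by
        rw [hderiv]
        have hsle : Real.sqrt (1 - ξ x ^ 2) ≤ Real.sqrt (1 - ξ x ^ 2 + c ^ 2) :=
          Real.sqrt_le_sqrt (by linarith)
        have h1 : (1 - ξ x ^ 2) / ε
            = ε⁻¹ * Real.sqrt (1 - ξ x ^ 2) * Real.sqrt (1 - ξ x ^ 2) := by
          rw [mul_assoc, Real.mul_self_sqrt (le_of_lt h0)]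
          rw [div_eq_inv_mul]
        rw [h1]
        show ε⁻¹ * √(1 - ξ x ^ 2) * √(1 - ξ x ^ 2) ≤ ε⁻¹ * √(1 - ξ x ^ 2) * √(1 - ξ x ^ 2 + c ^ 2)
        rw [mul_assoc, mul_assoc]
        apply mul_le_mul_of_nonneg_left _ (by positivity : (0:ℝ) ≤ ε⁻¹)
        exact mul_le_mul_of_nonneg_left hsle (Real.sqrt_nonneg _)
      have hdist : (1 - ξ x ^ 2 + c ^ 2) / ε = (1 - ξ x ^ 2) / ε + c ^ 2 / ε := by ring
      rw [heq, hdist]; linarith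
  have hfnn : ∀ x, 0 ≤ ε * (deriv ξ x) ^ 2 / (1 - ξ x ^ 2) + (1 - ξ x ^ 2) / ε := by
    intro x
    have := ha x
    positivity
  have hgcont : Continuous (fun x => 2 * deriv ξ x + c ^ 2 / ε) := by fun_prop
  have hgint : IntegrableOn (fun x => 2 * deriv ξ x + c ^ 2 / ε) (Set.Ioo (-η) η) :=
    (hgcont.integrableOn_Icc).mono_set Set.Ioo_subset_Icc_self
  have hfmeas : AEStronglyMeasurable
      (fun x => ε * (deriv ξ x) ^ 2 / (1 - ξ x ^ 2) + (1 - ξ x ^ 2) / ε)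
      (volume.restrict (Set.Ioo (-η) η)) := by
    apply Measurable.aestronglyMeasurable
    apply Measurable.add
    · exact ((continuous_const.mul (hdcont.pow 2)).measurable).div
        ((continuous_const.sub (hcont.pow 2)).measurable)
    · exact ((continuous_const.sub (hcont.pow 2)).div_const ε).measurable
  have hfint : IntegrableOn
      (fun x => ε * (deriv ξ x) ^ 2 / (1 - ξ x ^ 2) + (1 - ξ x ^ 2) / ε)
      (Set.Ioo (-η) η) := by
    apply hgint.mono' hfmeas
    filter_upwards with x
    rw [Real.norm_eq_abs, abs_of_nonneg (hfnn x)]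
    exact hpt x
  have hmono : ∫ x in Set.Ioo (-η) η,
        (ε * (deriv ξ x) ^ 2 / (1 - ξ x ^ 2) + (1 - ξ x ^ 2) / ε)
      ≤ ∫ x in Set.Ioo (-η) η, (2 * deriv ξ x + c ^ 2 / ε) :=
    setIntegral_mono_on hfint hgint measurableSet_Ioo (fun x _ => hpt x)
  have hIoo : ∫ x in Set.Ioo (-η) η, deriv ξ x = ξ η - ξ (-η) := by
    rw [← integral_Ioc_eq_integral_Ioo,
      ← intervalIntegral.integral_of_le (by linarith : -η ≤ η)]
    exact intervalIntegral.integral_deriv_eq_sub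
      (fun x _ => (hode x).differentiableAt) (hdcont.intervalIntegrable _ _)
  have hdint : IntegrableOn (fun x => 2 * deriv ξ x) (Set.Ioo (-η) η) :=
    ((continuous_const.mul hdcont).integrableOn_Icc).mono_set Set.Ioo_subset_Icc_self
  have hcint : IntegrableOn (fun _ : ℝ => c ^ 2 / ε) (Set.Ioo (-η) η) :=
    integrableOn_const (by rw [Real.volume_Ioo]; exact ENNReal.ofReal_ne_top)
  have hsplit : ∫ x in Set.Ioo (-η) η, (2 * deriv ξ x + c ^ 2 / ε)
      = 2 * (ξ η - ξ (-η)) + (2 * η) * (c ^ 2 / ε) := by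
    rw [integral_add hdint hcint, integral_const_mul, hIoo, setIntegral_const,
      measureReal_def, Real.volume_Ioo, ENNReal.toReal_ofReal (by linarith), smul_eq_mul]
    ring_nf
  have hlo : (-1 : ℝ) ≤ ξ (-η) := (hrange (-η)).1
  have hcval : c ^ 2 = π ^ 2 * ε ^ 2 / (4 * R ^ 2) := by
    rw [hc]; field_simp; ring
  have hfinal : (1/2 : ℝ) * (2 * (ξ η - ξ (-η)) + (2 * η) * (c ^ 2 / ε))
      ≤ 2 + π ^ 2 * ε / (4 * R) := by
    have hq : π ^ 2 * ε ^ 2 / (4 * R ^ 2) / ε = π ^ 2 * ε / (4 * R ^ 2) := by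
      field_simp
    rw [hη1, hcval, hq]
    have key : η * (π ^ 2 * ε / (4 * R ^ 2)) ≤ π ^ 2 * ε / (4 * R) := by
      calc η * (π ^ 2 * ε / (4 * R ^ 2)) ≤ R * (π ^ 2 * ε / (4 * R ^ 2)) := by
            apply mul_le_mul_of_nonneg_right hηR (by positivity)
        _ = π ^ 2 * ε / (4 * R) := by field_simp
    nlinarith [hlo, key]
  calc (1/2 : ℝ) * ∫ x in Set.Ioo (-η) η,
        (ε * (deriv ξ x) ^ 2 / (1 - ξ x ^ 2) + (1 - ξ x ^ 2) / ε)
      ≤ (1/2) * ∫ x in Set.Ioo (-η) η, (2 * deriv ξ x + c ^ 2 / ε) := by linarith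
    _ = (1/2) * (2 * (ξ η - ξ (-η)) + (2 * η) * (c ^ 2 / ε)) := by rw [hsplit]
    _ ≤ 2 + π ^ 2 * ε / (4 * R) := hfinal
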